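/- Let P be the transition matrix of an estimator on state space [q] satisfying P_{ii} = c ≥ 1/q + ε/(2q) for all i and P_{ij} = (1-c)/(q-1) for all i ≠ j, where ε ∈ (0,1). Then P = e^{b Q^(q)} for some b with 0 < b ≤ -ln(ε/(2(q-1))). -/

import Mathlib

noncomputable def Qmat (q : ℕ) : Matrix (Fin q) (Fin q) ℝ :=
  fun i j => if i = j then -((q : ℝ) - 1) / q else 1 / q

open NormedSpace

lemma exp_of_sq_neg {q : ℕ} (A : Matrix (Fin q) (Fin q) ℝ) (hA : A * A = -A) (t : ℝ) :
    exp (t • A) = 1 + (1 - Real.exp (-t)) • A := by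
  letI : NormedRing (Matrix (Fin q) (Fin q) ℝ) := Matrix.linftyOpNormedRing
  letI : NormedAlgebra ℝ (Matrix (Fin q) (Fin q) ℝ) := Matrix.linftyOpNormedAlgebra
  have hpow : ∀ n : ℕ, A ^ (n + 1) = ((-1 : ℝ)) ^ n • A := by
    intro n
    induction n with
    | zero => simp
    | succ n ih =>
      rw [pow_succ, ih, Matrix.smul_mul, hA, pow_succ]
      simp [smul_smul]
  have hsum : Summable fun n : ℕ => ((n.factorial : ℝ))⁻¹ • (t • A) ^ n :=
    expSeries_summable' (𝕂 := ℝ) (t • A)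
  rw [exp_eq_tsum ℝ]
  beta_reduce
  rw [Summable.tsum_eq_zero_add hsum]
  have h1 : ∀ n : ℕ, ((((n+1).factorial : ℝ))⁻¹ • (t • A) ^ (n+1))
      = (-((-t) ^ (n+1) / ((n+1).factorial : ℝ))) • A := by
    intro n
    rw [smul_pow, hpow, smul_smul, smul_smul]
    congr 1
    rw [neg_pow t, pow_succ]
    ring
  simp only [h1, pow_zero, Nat.factorial_zero]
  have hs2 : Summable fun n : ℕ => -((-t) ^ (n+1) / ((n+1).factorial : ℝ)) := by
    have := (Real.summable_pow_div_factorial (-t)).neg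
    exact (this.comp_injective (add_left_injective 1))
  rw [Summable.tsum_smul_const]
  · congr 1
    · simp
    · congr 1
      have hexp : Real.exp (-t) = ∑' n : ℕ, (-t) ^ n / (n.factorial : ℝ) := by
        rw [Real.exp_eq_exp_ℝ, exp_eq_tsum_div]
      rw [tsum_neg]
      have := Summable.tsum_eq_zero_add (Real.summable_pow_div_factorial (-t))
      rw [this] at hexp
      simp at hexp
      linarith [hexp]
  · exact hs2

lemma Qmat_sq (q : ℕ) (hq : 2 ≤ q) : Qmat q * Qmat q = -(Qmat q) := by
  have hq0 : (q : ℝ) ≠ 0 := by positivity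
  set J : Matrix (Fin q) (Fin q) ℝ := Matrix.of fun _ _ => 1 with hJdef
  have hJ : J * J = (q : ℝ) • J := by
    ext i j
    simp [hJdef, Matrix.mul_apply]
  have hQ : Qmat q = (q : ℝ)⁻¹ • J - 1 := by
    ext i j
    by_cases h : i = j
    · subst h
      simp [Qmat, hJdef, Matrix.one_apply]
      field_simp
    · simp [Qmat, hJdef, Matrix.one_apply, h]
  rw [hQ]
  rw [sub_mul, mul_sub, mul_sub, Matrix.smul_mul, Matrix.mul_smul, hJ]
  rw [smul_smul, smul_smul]
  rw [mul_assoc, inv_mul_cancel₀ hq0]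
  simp

theorem stmt6 (q : ℕ) (hq : 2 ≤ q) (ε c : ℝ) (hε : 0 < ε) (hε1 : ε < 1)
    (hc : 1 / q + ε / (2 * q) ≤ c) (hc1 : c < 1)
    (P : Matrix (Fin q) (Fin q) ℝ)
    (hP : ∀ i j, P i j = if i = j then c else (1 - c) / ((q : ℝ) - 1)) :
    ∃ b : ℝ, 0 < b ∧ b ≤ -Real.log (ε / (2 * ((q : ℝ) - 1))) ∧
      P = NormedSpace.exp (b • Qmat q) := by
  have hq2 : (2 : ℝ) ≤ (q : ℝ) := by exact_mod_cast hq
  have hq0 : (0 : ℝ) < q := by linarith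
  have hq1 : (0 : ℝ) < (q : ℝ) - 1 := by linarith
  set r : ℝ := ((q : ℝ) * c - 1) / ((q : ℝ) - 1) with hr
  have hqc : 1 + ε / 2 ≤ (q : ℝ) * c := by
    have := mul_le_mul_of_nonneg_left hc (le_of_lt hq0)
    calc 1 + ε / 2 = (q:ℝ) * (1 / q + ε / (2 * q)) := by field_simp
    _ ≤ (q:ℝ) * c := this
  have hrpos : 0 < r := by
    apply div_pos _ hq1
    linarith
  have hrlt1 : r < 1 := by
    rw [div_lt_one hq1]
    nlinarith
  have hrge : ε / (2 * ((q : ℝ) - 1)) ≤ r := by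
    rw [div_le_div_iff₀ (by positivity) hq1]
    ring_nf
    nlinarith
  refine ⟨-Real.log r, ?_, ?_, ?_⟩
  · simpa using Real.log_neg hrpos hrlt1
  · have := Real.log_le_log (by positivity) hrge
    linarith
  · rw [exp_of_sq_neg (Qmat q) (Qmat_sq q hq)]
    rw [neg_neg, Real.exp_log hrpos]
    ext i j
    by_cases h : i = j
    · subst h
      simp [hP, Qmat, Matrix.add_apply, Matrix.one_apply, hr]
      field_simp
      ring
    · simp [hP, Qmat, Matrix.add_apply, Matrix.one_apply, h, hr]
      field_simp
      ring
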